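/- For every n ≥ 1, the determinant of the Gram matrix G_n is a nonzero element of the polynomial ring ℤ[Q₁,Q₂]. -/

import Mathlib

attribute [local instance] Classical.propDecidable

namespace RamifiedGram

instance setoidFinite {α : Type*} [Finite α] : Finite (Setoid α) :=
  Finite.of_injective (fun s => s.r) (fun s t h => by cases s; cases t; cases h; rfl)

/-- The 2-ramified partitions of `Fin n`: pairs of equivalence relations
`(a₁, a₂)` with `a₁ ≤ a₂` (`a₁` refines `a₂`). -/
def RamPart (n : ℕ) : Type := {p : Setoid (Fin n) × Setoid (Fin n) // p.1 ≤ p.2}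

noncomputable instance (n : ℕ) : Fintype (RamPart n) := by
  unfold RamPart; exact Fintype.ofFinite _

/-- The Gram matrix `G_n` over `ℤ[Q₁,Q₂]` (with `Q₁ = X 0`, `Q₂ = X 1`):
the `(a,b)` entry is `Q₁^{k(a,b)} Q₂^{h(a,b)}` where `k(a,b)` is the number of
parts of the join `a₂ ∨ b₂` of the coarser components and `h(a,b)` is the
number of parts of the join `a₁ ∨ b₁` of the finer components. -/
noncomputable def gram (n : ℕ) : Matrix (RamPart n) (RamPart n) (MvPolynomial (Fin 2) ℤ) :=
  fun a b =>
    MvPolynomial.X 0 ^ Nat.card (Quotient (a.1.2 ⊔ b.1.2)) *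
    MvPolynomial.X 1 ^ Nat.card (Quotient (a.1.1 ⊔ b.1.1))

end RamifiedGram

namespace RamifiedGram

instance (n : ℕ) : PartialOrder (RamPart n) :=
  inferInstanceAs (PartialOrder {p : Setoid (Fin n) × Setoid (Fin n) // p.1 ≤ p.2})

lemma RamPart.le_iff {n : ℕ} (c b : RamPart n) :
    c ≤ b ↔ c.1.1 ≤ b.1.1 ∧ c.1.2 ≤ b.1.2 := Iff.rfl

/-- Counting functions constant on the classes of a setoid. -/
lemma card_filter_ker (n : ℕ) (s : Setoid (Fin n)) :
    ((Finset.univ : Finset (Fin n → Fin n)).filter fun φ => s ≤ Setoid.ker φ).card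
      = n ^ Nat.card (Quotient s) := by
  classical
  have e : (Quotient s → Fin n) ≃ {φ : Fin n → Fin n // s ≤ Setoid.ker φ} :=
  { toFun := fun g => ⟨fun i => g (Quotient.mk s i),
      fun i j h => congrArg g (Quotient.sound h)⟩
    invFun := fun φ => Quotient.lift φ.1 fun i j h => φ.2 h
    left_inv := fun g => by
      funext x
      induction x using Quotient.ind
      rfl
    right_inv := fun φ => rfl }
  rw [← Fintype.card_subtype, ← Fintype.card_congr e, Fintype.card_fun,
    Fintype.card_fin, Nat.card_eq_fintype_card]

/-- Every setoid on `Fin n` is the kernel of a self-map of `Fin n`. -/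
lemma exists_ker (n : ℕ) (s : Setoid (Fin n)) :
    ∃ φ : Fin n → Fin n, Setoid.ker φ = s := by
  classical
  have hcard : Fintype.card (Quotient s) ≤ Fintype.card (Fin n) :=
    Fintype.card_quotient_le s
  obtain ⟨e⟩ := Function.Embedding.nonempty_of_card_le hcard
  refine ⟨fun i => e (Quotient.mk s i), ?_⟩
  ext i j
  constructor
  · intro h
    exact Quotient.exact (e.injective h)
  · intro h
    exact congrArg e (Quotient.sound h)

/-- The weight vectors realizing the evaluated Gram matrix as an inner product. -/
noncomputable def w {n : ℕ} (a : RamPart n) (p : (Fin n → Fin n) × (Fin n → Fin n)) : ℚ :=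
  if a.1.2 ≤ Setoid.ker p.1 ∧ a.1.1 ≤ Setoid.ker p.2 then 1 else 0

lemma w_inner {n : ℕ} (a b : RamPart n) :
    ∑ p : (Fin n → Fin n) × (Fin n → Fin n), w a p * w b p
      = (n : ℚ) ^ Nat.card (Quotient (a.1.2 ⊔ b.1.2))
        * (n : ℚ) ^ Nat.card (Quotient (a.1.1 ⊔ b.1.1)) := by
  classical
  have key : ∀ p : (Fin n → Fin n) × (Fin n → Fin n),
      w a p * w b p
        = (if a.1.2 ⊔ b.1.2 ≤ Setoid.ker p.1 then (1:ℚ) else 0)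
          * (if a.1.1 ⊔ b.1.1 ≤ Setoid.ker p.2 then (1:ℚ) else 0) := by
    intro p
    by_cases hA : a.1.2 ≤ Setoid.ker p.1 <;>
      by_cases hB : a.1.1 ≤ Setoid.ker p.2 <;>
        by_cases hC : b.1.2 ≤ Setoid.ker p.1 <;>
          by_cases hD : b.1.1 ≤ Setoid.ker p.2 <;>
            simp [w, sup_le_iff, hA, hB, hC, hD]
  rw [Finset.sum_congr rfl fun p _ => key p]
  rw [← Finset.univ_product_univ, Finset.sum_product]
  dsimp only
  rw [← Finset.sum_mul_sum Finset.univ Finset.univ (fun x : Fin n → Fin n => if a.1.2 ⊔ b.1.2 ≤ Setoid.ker x then (1:ℚ) else 0) (fun y : Fin n → Fin n => if a.1.1 ⊔ b.1.1 ≤ Setoid.ker y then (1:ℚ) else 0)]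
  rw [Finset.sum_boole, Finset.sum_boole, card_filter_ker, card_filter_ker]
  push_cast
  ring

/-- for every `n ≥ 1`, `det G_n` is a nonzero element of
`ℤ[Q₁,Q₂]`. -/
theorem gram_det_ne_zero (n : ℕ) (hn : 1 ≤ n) : (gram n).det ≠ 0 := by
  classical
  -- evaluate at Q₁ = Q₂ = n
  set f : MvPolynomial (Fin 2) ℤ →+* ℚ :=
    MvPolynomial.eval₂Hom (Int.castRingHom ℚ) (fun _ => (n : ℚ)) with hf
  -- the evaluated matrix
  set N : Matrix (RamPart n) (RamPart n) ℚ := (gram n).map f with hN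
  have hNentry : ∀ a b : RamPart n,
      N a b = (n : ℚ) ^ Nat.card (Quotient (a.1.2 ⊔ b.1.2))
        * (n : ℚ) ^ Nat.card (Quotient (a.1.1 ⊔ b.1.1)) := by
    intro a b
    simp [hN, Matrix.map_apply, gram, hf]
  -- the evaluated matrix has nonzero determinant
  have hNdet : N.det ≠ 0 := by
    intro hdet
    obtain ⟨v, hv0, hv⟩ := Matrix.exists_mulVec_eq_zero_iff.2 hdet
    -- each row equation
    have hrow : ∀ a : RamPart n, ∑ b : RamPart n, N a b * v b = 0 := fun a =>
      congrFun hv a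
    -- the quadratic form vanishes, written as a sum of squares
    have hsq : ∑ p : (Fin n → Fin n) × (Fin n → Fin n),
        (∑ a : RamPart n, v a * w a p) ^ 2 = 0 := by
      have expand : ∀ p : (Fin n → Fin n) × (Fin n → Fin n),
          (∑ a : RamPart n, v a * w a p) ^ 2
            = ∑ a : RamPart n, ∑ b : RamPart n, v a * v b * (w a p * w b p) := by
        intro p
        rw [sq, Finset.sum_mul_sum]
        exact Finset.sum_congr rfl fun a _ => Finset.sum_congr rfl fun b _ => by ring
      calc ∑ p : (Fin n → Fin n) × (Fin n → Fin n), (∑ a : RamPart n, v a * w a p) ^ 2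
          = ∑ p : (Fin n → Fin n) × (Fin n → Fin n), ∑ a : RamPart n, ∑ b : RamPart n,
              v a * v b * (w a p * w b p) := Finset.sum_congr rfl fun p _ => expand p
        _ = ∑ a : RamPart n, ∑ p : (Fin n → Fin n) × (Fin n → Fin n), ∑ b : RamPart n,
              v a * v b * (w a p * w b p) := Finset.sum_comm
        _ = ∑ a : RamPart n, ∑ b : RamPart n, ∑ p : (Fin n → Fin n) × (Fin n → Fin n),
              v a * v b * (w a p * w b p) :=
            Finset.sum_congr rfl fun a _ => Finset.sum_comm
        _ = ∑ a : RamPart n, ∑ b : RamPart n, v a * v b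
              * ∑ p : (Fin n → Fin n) × (Fin n → Fin n), w a p * w b p := by
            refine Finset.sum_congr rfl fun a _ => Finset.sum_congr rfl fun b _ => ?_
            rw [Finset.mul_sum]
        _ = ∑ a : RamPart n, ∑ b : RamPart n, v a * (N a b * v b) := by
            refine Finset.sum_congr rfl fun a _ => Finset.sum_congr rfl fun b _ => ?_
            rw [w_inner, ← hNentry]
            ring
        _ = ∑ a : RamPart n, v a * ∑ b : RamPart n, N a b * v b := by
            refine Finset.sum_congr rfl fun a _ => ?_
            rw [Finset.mul_sum]
        _ = 0 := by
            refine Finset.sum_eq_zero fun a _ => ?_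
            rw [hrow a, mul_zero]
    -- hence each linear form vanishes
    have hlin : ∀ p : (Fin n → Fin n) × (Fin n → Fin n),
        ∑ a : RamPart n, v a * w a p = 0 := by
      intro p
      have := (Finset.sum_eq_zero_iff_of_nonneg
        (fun q _ => sq_nonneg (∑ a : RamPart n, v a * w a q))).1 hsq p (Finset.mem_univ p)
      exact (pow_eq_zero_iff two_ne_zero).1 this
    -- evaluating the linear forms at kernel pairs shows all partial sums vanish
    have hL : ∀ b : RamPart n,
        ∑ c ∈ Finset.univ.filter (fun c : RamPart n => c ≤ b), v c = 0 := by
      intro b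
      obtain ⟨φ, hφ⟩ := exists_ker n b.1.2
      obtain ⟨ψ, hψ⟩ := exists_ker n b.1.1
      have hcond : ∀ c : RamPart n,
          (c.1.2 ≤ Setoid.ker φ ∧ c.1.1 ≤ Setoid.ker ψ) ↔ c ≤ b := by
        intro c
        rw [hφ, hψ, RamPart.le_iff]
        exact and_comm
      have h := hlin (φ, ψ)
      have hterm : ∀ c : RamPart n, v c * w c (φ, ψ) = if c ≤ b then v c else 0 := by
        intro c
        unfold w
        by_cases hc : c ≤ b
        · rw [if_pos ((hcond c).2 hc), if_pos hc, mul_one]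
        · rw [if_neg (fun hx => hc ((hcond c).1 hx)), if_neg hc, mul_zero]
      rw [Finset.sum_filter, Finset.sum_congr rfl fun c _ => (hterm c).symm]
      exact h
    -- well-founded induction: all coefficients vanish
    have hwf : WellFounded ((· < ·) : RamPart n → RamPart n → Prop) :=
      (Finite.to_wellFoundedLT (α := RamPart n)).wf
    have hv' : ∀ a : RamPart n, v a = 0 := by
      intro a
      refine hwf.induction (C := fun a => v a = 0) a fun a ih => ?_
      have hsum : ∑ c ∈ Finset.univ.filter (fun c : RamPart n => c ≤ a), v c = v a := by
        have hmem : a ∈ Finset.filter (fun c : RamPart n => c ≤ a) Finset.univ :=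
          Finset.mem_filter.2 ⟨Finset.mem_univ a, le_refl a⟩
        rw [Finset.sum_eq_single_of_mem a hmem]
        intro c hc hne
        exact ih c (lt_of_le_of_ne (Finset.mem_filter.1 hc).2 hne)
      exact hsum.symm.trans (hL a)
    exact hv0 (funext hv')
  -- transfer back
  intro h0
  apply hNdet
  rw [hN, ← RingHom.mapMatrix_apply, ← RingHom.map_det, h0, map_zero]

end RamifiedGram
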